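/- arXiv:2507.17073 — 2 statements merged into one kernel-verified Lean document; each statement's English description precedes it below -/
import Mathlib

section
/- For every β ≥ 0 and every x ∈ (0,∞), if tanh(βx) > x then x < m(β), where m(β) is the largest solution of the Curie-Weiss equation tanh(βx) = x. -/
/-- `m β` is the largest solution of the Curie-Weiss equation `tanh (β * x) = x`. -/
noncomputable def cwM (β : ℝ) : ℝ := sSup {x : ℝ | Real.tanh (β * x) = x}


lemma my_tanh_lt_one (x : ℝ) : Real.tanh x < 1 := by
  rw [Real.tanh_eq_sinh_div_cosh]
  exact (div_lt_one (Real.cosh_pos x)).mpr (Real.sinh_lt_cosh x)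

lemma my_continuous_tanh : Continuous Real.tanh := by
  have : Real.tanh = fun x => Real.sinh x / Real.cosh x := funext fun x => Real.tanh_eq_sinh_div_cosh x
  rw [this]
  exact Real.continuous_sinh.div Real.continuous_cosh (fun x => (Real.cosh_pos x).ne')

theorem stmt_0 (β : ℝ) (hβ : 0 ≤ β) (x : ℝ) (hx : 0 < x)
    (h : x < Real.tanh (β * x)) : x < cwM β := by
  set S : Set ℝ := {x : ℝ | Real.tanh (β * x) = x} with hS
  have hbdd : BddAbove S := by
    refine ⟨1, fun z hz => ?_⟩
    have : Real.tanh (β * z) < 1 := my_tanh_lt_one _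
    linarith [hz.out]
  have hx1 : x ≤ 1 := le_of_lt (lt_trans h (my_tanh_lt_one _))
  have hcont : ContinuousOn (fun t => t - Real.tanh (β * t)) (Set.Icc x 1) :=
    (continuous_id.sub (my_continuous_tanh.comp (continuous_const.mul continuous_id))).continuousOn
  have h0 : (0:ℝ) ∈ Set.Icc (x - Real.tanh (β * x)) (1 - Real.tanh (β * 1)) := by
    constructor
    · linarith
    · have := my_tanh_lt_one (β * 1)
      linarith
  obtain ⟨y, hy, hy0⟩ := intermediate_value_Icc hx1 hcont h0
  have hyS : y ∈ S := by
    simp only [hS, Set.mem_setOf_eq]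
    dsimp at hy0
    linarith
  have hxy : x < y := by
    rcases lt_or_eq_of_le hy.1 with hlt | heq
    · exact hlt
    · exfalso; rw [← heq] at hy0; dsimp at hy0; linarith
  exact lt_of_lt_of_le hxy (le_csSup hbdd hyS)
end

section
/- The Legendre transform of t ↦ ln cosh t is given by Λ*(x) = ((1−x)/2)·ln(1−x) + ((1+x)/2)·ln(1+x) for x ∈ (−1,1), Λ*(±1) = ln 2, and Λ*(x) = ∞ for |x| > 1. -/
/-- The Legendre transform of `t ↦ ln cosh t`, valued in the extended reals. -/
noncomputable def lambdaStar (x : ℝ) : EReal :=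
  ⨆ t : ℝ, ((x * t - Real.log (Real.cosh t) : ℝ) : EReal)

open Real Filter

private theorem lcosh_key_ineq (x t : ℝ) (h1 : -1 < x) (h2 : x < 1) :
    x * t - log (cosh t) ≤ (1 - x) / 2 * log (1 - x) + (1 + x) / 2 * log (1 + x) := by
  set p := (1 + x) / 2 with hp
  set q := (1 - x) / 2 with hq
  have hp0 : 0 < p := by rw [hp]; linarith
  have hq0 : 0 < q := by rw [hq]; linarith
  set a := exp t / (2 * p) with ha
  set b := exp (-t) / (2 * q) with hb
  have ha0 : 0 < a := by positivity
  have hb0 : 0 < b := by positivity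
  have hamgm : a ^ p * b ^ q ≤ p * a + q * b :=
    Real.geom_mean_le_arith_mean2_weighted hp0.le hq0.le ha0.le hb0.le (by rw [hp, hq]; ring)
  have hsum : p * a + q * b = cosh t := by
    rw [ha, hb, cosh_eq]; field_simp
  have hlog : log (a ^ p * b ^ q) ≤ log (cosh t) := by
    apply Real.log_le_log (by positivity)
    rw [← hsum]; exact hamgm
  have hexpand : log (a ^ p * b ^ q) = x * t - (q * log (1 - x) + p * log (1 + x)) := by
    rw [Real.log_mul (by positivity) (by positivity), Real.log_rpow ha0, Real.log_rpow hb0,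
      ha, hb, Real.log_div (exp_ne_zero _) (by positivity),
      Real.log_div (exp_ne_zero _) (by positivity), Real.log_exp, Real.log_exp,
      show (2:ℝ)*p = 1 + x by rw [hp]; ring, show (2:ℝ)*q = 1 - x by rw [hq]; ring]
    rw [hp, hq]; ring
  linarith [hexpand ▸ hlog]

private theorem lcosh_attained (x : ℝ) (h1 : -1 < x) (h2 : x < 1) :
    x * ((log (1 + x) - log (1 - x)) / 2) -
        log (cosh ((log (1 + x) - log (1 - x)) / 2)) =
      (1 - x) / 2 * log (1 - x) + (1 + x) / 2 * log (1 + x) := by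
  set t := (log (1 + x) - log (1 - x)) / 2 with ht
  have hA : (0:ℝ) < 1 + x := by linarith
  have hB : (0:ℝ) < 1 - x := by linarith
  set A := Real.sqrt (1 + x) with hAdef
  set B := Real.sqrt (1 - x) with hBdef
  have hA0 : 0 < A := Real.sqrt_pos.mpr hA
  have hB0 : 0 < B := Real.sqrt_pos.mpr hB
  have hA2 : A ^ 2 = 1 + x := Real.sq_sqrt hA.le
  have hB2 : B ^ 2 = 1 - x := Real.sq_sqrt hB.le
  have hlogA : log (1 + x) = 2 * log A := by
    rw [← hA2, Real.log_pow]; push_cast; ring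
  have hlogB : log (1 - x) = 2 * log B := by
    rw [← hB2, Real.log_pow]; push_cast; ring
  have htt : t = log A - log B := by rw [ht, hlogA, hlogB]; ring
  have hexp : exp t = A / B := by
    rw [htt, Real.exp_sub, Real.exp_log hA0, Real.exp_log hB0]
  have hexp' : exp (-t) = B / A := by
    rw [← Real.exp_log hB0, ← Real.exp_log hA0, ← Real.exp_sub, htt]; ring_nf
  have hcosh : cosh t = 1 / (A * B) := by
    rw [cosh_eq, hexp, hexp']
    have hA2' : A * A = 1 + x := by rw [← hA2]; ring
    have hB2' : B * B = 1 - x := by rw [← hB2]; ring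
    field_simp
    linear_combination hA2' + hB2'
  rw [hcosh, Real.log_div one_ne_zero (by positivity), Real.log_one,
    Real.log_mul hA0.ne' hB0.ne', htt, hlogA, hlogB]
  ring

private theorem lcosh_ident (t : ℝ) :
    t - log (cosh t) = log 2 - log (1 + exp (-2 * t)) := by
  have h1 : (0:ℝ) < 1 + exp (-2 * t) := by positivity
  have hc : cosh t = exp t * (1 + exp (-2 * t)) / 2 := by
    rw [cosh_eq, mul_add, mul_one, ← Real.exp_add]
    ring_nf
  rw [hc, Real.log_div (by positivity) two_ne_zero, Real.log_mul (exp_ne_zero _) h1.ne',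
    Real.log_exp]
  ring

private theorem lcosh_tends :
    Tendsto (fun t : ℝ => t - log (cosh t)) atTop (nhds (log 2)) := by
  have h2 : Tendsto (fun t : ℝ => exp (-2 * t)) atTop (nhds 0) := by
    have hm : Tendsto (fun t : ℝ => 2 * t) atTop atTop :=
      tendsto_id.const_mul_atTop (by norm_num : (0:ℝ) < 2)
    have := Real.tendsto_exp_neg_atTop_nhds_zero.comp hm
    simpa [Function.comp_def, neg_mul] using this
  have h3 : Tendsto (fun t : ℝ => log (1 + exp (-2 * t))) atTop (nhds 0) := by
    have := (Real.continuousAt_log (by norm_num : (1:ℝ) + 0 ≠ 0)).tendsto.comp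
      ((tendsto_const_nhds.add h2))
    simpa [Function.comp_def] using this
  have h4 : Tendsto (fun t : ℝ => log 2 - log (1 + exp (-2 * t))) atTop (nhds (log 2 - 0)) :=
    tendsto_const_nhds.sub h3
  simpa [lcosh_ident] using h4

private theorem lcosh_bound1 (t : ℝ) : t - log (cosh t) ≤ log 2 := by
  have h := lcosh_ident t
  have : 0 ≤ log (1 + exp (-2 * t)) :=
    Real.log_nonneg (by linarith [exp_pos (-2 * t)])
  linarith

private theorem lcosh_le_self (t : ℝ) (ht : 0 ≤ t) : log (cosh t) ≤ t := by
  have : cosh t ≤ exp t := by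
    rw [cosh_eq]
    have : exp (-t) ≤ exp t := exp_le_exp.mpr (by linarith)
    linarith
  calc log (cosh t) ≤ log (exp t) := Real.log_le_log (cosh_pos t) this
    _ = t := Real.log_exp t

private theorem lambdaStar_neg (x : ℝ) : lambdaStar (-x) = lambdaStar x := by
  have key : ∀ y : ℝ, lambdaStar (-y) ≤ lambdaStar y := by
    intro y
    rw [lambdaStar, lambdaStar]
    refine iSup_le fun t => le_iSup_of_le (-t) ?_
    have h : (-y * t - log (cosh t) : ℝ) = y * (-t) - log (cosh (-t)) := by
      rw [Real.cosh_neg]; ring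
    exact le_of_eq (by exact_mod_cast h)
  refine le_antisymm (key x) ?_
  have := key (-x)
  rwa [neg_neg] at this

private theorem lambdaStar_one : lambdaStar 1 = ((Real.log 2 : ℝ) : EReal) := by
  rw [lambdaStar]
  apply le_antisymm
  · exact iSup_le fun t => EReal.coe_le_coe_iff.mpr (by simpa using lcosh_bound1 t)
  · rw [le_iSup_iff]
    intro b hb
    induction b using EReal.rec with
    | bot => simpa using hb 0
    | coe r =>
        have hr : ∀ t : ℝ, t - log (cosh t) ≤ r := by
          intro t
          have := EReal.coe_le_coe_iff.mp (hb t)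
          linarith
        exact EReal.coe_le_coe_iff.mpr (le_of_tendsto lcosh_tends (Eventually.of_forall hr))
    | top => exact le_top

private theorem lambdaStar_top (y : ℝ) (hy : 1 < y) : lambdaStar y = ⊤ := by
  rw [lambdaStar, iSup_eq_top]
  intro b hb
  obtain ⟨r, hbr, -⟩ := EReal.lt_iff_exists_real_btwn.mp hb
  set t := max 1 ((r + 1) / (y - 1)) with htdef
  refine ⟨t, lt_trans hbr ?_⟩
  rw [EReal.coe_lt_coe_iff]
  have ht0 : (0:ℝ) ≤ t := le_trans zero_le_one (le_max_left _ _)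
  have h1 : log (cosh t) ≤ t := lcosh_le_self t ht0
  have h2 : r + 1 ≤ t * (y - 1) := by
    have := le_max_right 1 ((r + 1) / (y - 1))
    exact (div_le_iff₀ (by linarith : (0:ℝ) < y - 1)).mp this
  nlinarith

theorem stmt_11 :
    (∀ x : ℝ, x ∈ Set.Ioo (-1 : ℝ) 1 →
        lambdaStar x
          = (((1 - x) / 2 * Real.log (1 - x) + (1 + x) / 2 * Real.log (1 + x) : ℝ) : EReal)) ∧
      lambdaStar 1 = ((Real.log 2 : ℝ) : EReal) ∧
      lambdaStar (-1) = ((Real.log 2 : ℝ) : EReal) ∧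
      (∀ x : ℝ, 1 < |x| → lambdaStar x = ⊤) := by
  refine ⟨?_, lambdaStar_one, ?_, ?_⟩
  · rintro x ⟨h1, h2⟩
    rw [lambdaStar]
    apply le_antisymm
    · exact iSup_le fun t => EReal.coe_le_coe_iff.mpr (lcosh_key_ineq x t h1 h2)
    · exact le_iSup_of_le ((log (1 + x) - log (1 - x)) / 2)
        (le_of_eq (by exact_mod_cast (lcosh_attained x h1 h2).symm))
  · rw [show (-1 : ℝ) = -(1 : ℝ) by norm_num, lambdaStar_neg]
    exact lambdaStar_one
  · intro x hx
    rcases lt_abs.mp hx with h | h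
    · exact lambdaStar_top x h
    · rw [← lambdaStar_neg x]
      exact lambdaStar_top (-x) h
end
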